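/- Let ξ ≠ 0 be real, let c > 0, and set a := (cξ − 1)/ξ and k := a·i ∈ ℂ. Then k satisfies the fixed-point equation k = ∫_ℝ v φ(v) / (−iξk + iξv + 1) dv if and only if ξ = ∫_ℝ c φ(v)/(c² + v²) dv, where φ(v) = e^{-v²}/√π. -/

import Mathlib

open MeasureTheory Real Complex

noncomputable def phi (v : ℝ) : ℝ := Real.exp (-v^2) / Real.sqrt Real.pi

lemma phi_nonneg (v : ℝ) : 0 ≤ phi v :=
  div_nonneg (Real.exp_nonneg _) (Real.sqrt_nonneg _)

lemma phi_continuous : Continuous phi := by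
  unfold phi; fun_prop

lemma phi_integrable : Integrable phi := by
  have h : Integrable (fun v : ℝ => Real.exp (-(1:ℝ) * v ^ 2)) :=
    integrable_exp_neg_mul_sq one_pos
  have h2 : Integrable (fun v : ℝ => Real.exp (-v ^ 2)) := by simpa using h
  show Integrable (fun v => Real.exp (-v^2) / Real.sqrt Real.pi)
  simpa [phi, div_eq_mul_inv] using h2.mul_const (Real.sqrt Real.pi)⁻¹

lemma phi_integral : ∫ v : ℝ, phi v = 1 := by
  have h : ∫ v : ℝ, Real.exp (-(1:ℝ) * v ^ 2) = Real.sqrt (Real.pi / 1) :=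
    integral_gaussian 1
  have h2 : ∫ v : ℝ, Real.exp (-v ^ 2) = Real.sqrt Real.pi := by simpa using h
  have hπ : Real.sqrt Real.pi ≠ 0 := by positivity
  simp only [phi, div_eq_mul_inv]
  rw [MeasureTheory.integral_mul_const, h2, mul_inv_cancel₀ hπ]

theorem dispersion_fixed_point_iff
    (ξ : ℝ) (hξ : ξ ≠ 0) (c : ℝ) (hc : 0 < c)
    (a : ℝ) (ha : a = (c * ξ - 1) / ξ) (k : ℂ) (hk : k = (a : ℂ) * Complex.I) :
    (k = ∫ v : ℝ, (v : ℂ) * (phi v : ℂ) /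
        (-Complex.I * (ξ : ℂ) * k + Complex.I * (ξ : ℂ) * (v : ℂ) + 1)) ↔
    ξ = ∫ v : ℝ, c * phi v / (c^2 + v^2) := by
  have haξ : a * ξ = c * ξ - 1 := by rw [ha, div_mul_cancel₀ _ hξ]
  have hden : ∀ v : ℝ, 0 < c ^ 2 + v ^ 2 := fun v => by positivity
  set f₁ : ℝ → ℝ := fun v => c * v * phi v / (c ^ 2 + v ^ 2) with hf₁
  set f₂ : ℝ → ℝ := fun v => v ^ 2 * phi v / (c ^ 2 + v ^ 2) with hf₂
  set g : ℝ → ℝ := fun v => c * phi v / (c ^ 2 + v ^ 2) with hg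
  -- integrability
  have hcont1 : Continuous f₁ := by
    rw [hf₁]
    exact ((continuous_const.mul continuous_id).mul phi_continuous).div
      (by fun_prop) (fun v => (hden v).ne')
  have hcont2 : Continuous f₂ := by
    rw [hf₂]
    exact ((continuous_pow 2).mul phi_continuous).div
      (by fun_prop) (fun v => (hden v).ne')
  have hcontg : Continuous g := by
    rw [hg]
    exact (continuous_const.mul phi_continuous).div
      (by fun_prop) (fun v => (hden v).ne')
  have hint₁ : Integrable f₁ := by
    refine phi_integrable.mono' hcont1.aestronglyMeasurable ?_
    filter_upwards with v
    have h1 : |c * v| ≤ c ^ 2 + v ^ 2 := by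
      rw [_root_.abs_mul]
      nlinarith [_root_.sq_abs c, _root_.sq_abs v, abs_nonneg c, abs_nonneg v,
        sq_nonneg (|c| - |v|), sq_nonneg (|c| + |v|)]
    have h2 : |f₁ v| = |c * v| * phi v / (c ^ 2 + v ^ 2) := by
      rw [hf₁]
      rw [_root_.abs_div, _root_.abs_mul, _root_.abs_of_nonneg (phi_nonneg v),
        _root_.abs_of_pos (hden v)]
    rw [Real.norm_eq_abs, h2, div_le_iff₀ (hden v)]
    nlinarith [phi_nonneg v, hden v]
  have hint₂ : Integrable f₂ := by
    refine phi_integrable.mono' hcont2.aestronglyMeasurable ?_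
    filter_upwards with v
    have he : f₂ v = v ^ 2 * phi v / (c ^ 2 + v ^ 2) := rfl
    have h2 : |f₂ v| = v ^ 2 * phi v / (c ^ 2 + v ^ 2) := by
      rw [he]
      exact _root_.abs_of_nonneg (div_nonneg (mul_nonneg (sq_nonneg v) (phi_nonneg v)) (hden v).le)
    rw [Real.norm_eq_abs, h2, div_le_iff₀ (hden v)]
    nlinarith [phi_nonneg v, hden v, sq_nonneg c]
  have hintg : Integrable g := by
    refine ((phi_integrable.const_mul (1/c)).mono' hcontg.aestronglyMeasurable) ?_
    filter_upwards with v
    have he : g v = c * phi v / (c ^ 2 + v ^ 2) := rfl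
    have h2 : |g v| = c * phi v / (c ^ 2 + v ^ 2) := by
      rw [he]
      exact _root_.abs_of_nonneg
        (div_nonneg (mul_nonneg hc.le (phi_nonneg v)) (hden v).le)
    rw [Real.norm_eq_abs, h2, div_le_iff₀ (hden v),
      show (1:ℝ) / c * phi v * (c ^ 2 + v ^ 2) = phi v * (c ^ 2 + v ^ 2) / c from by ring,
      le_div_iff₀ hc]
    nlinarith [phi_nonneg v, sq_nonneg v]
  -- f₁ is odd so its integral vanishes
  have hodd : ∫ v : ℝ, f₁ v = 0 := by
    have h1 : ∫ v : ℝ, f₁ (-v) = ∫ v : ℝ, f₁ v := integral_neg_eq_self f₁ volume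
    have h2 : ∀ v : ℝ, f₁ (-v) = - f₁ v := by
      intro v
      simp only [hf₁, phi]
      ring_nf
    rw [MeasureTheory.integral_congr_ae (Filter.Eventually.of_forall h2)] at h1
    rw [MeasureTheory.integral_neg] at h1
    linarith
  -- compute ∫ f₂
  set T : ℝ := ∫ v : ℝ, g v with hT
  have hf₂eq : ∀ v : ℝ, f₂ v = phi v - c * g v := by
    intro v
    have h := (hden v).ne'
    simp only [hf₂, hg]
    field_simp
    ring
  have hintf₂ : ∫ v : ℝ, f₂ v = 1 - c * T := by
    rw [MeasureTheory.integral_congr_ae (Filter.Eventually.of_forall hf₂eq),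
      MeasureTheory.integral_sub phi_integrable (hintg.const_mul c),
      MeasureTheory.integral_const_mul, phi_integral, hT]
  -- rewrite the complex integrand
  have hcv : ∀ v : ℝ, ((c : ℂ) + Complex.I * v) ≠ 0 := by
    intro v h
    have := congrArg Complex.re h
    simp at this
    linarith
  have hptwise : ∀ v : ℝ,
      (v : ℂ) * (phi v : ℂ) /
        (-Complex.I * (ξ : ℂ) * k + Complex.I * (ξ : ℂ) * (v : ℂ) + 1) =
      ((1 : ℂ) / ξ) * ((f₁ v : ℂ) - (f₂ v : ℂ) * Complex.I) := by
    intro v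
    have hdenr : -Complex.I * (ξ : ℂ) * k + Complex.I * (ξ : ℂ) * (v : ℂ) + 1
        = (ξ : ℂ) * ((c : ℂ) + Complex.I * v) := by
      rw [hk]
      have : ((a : ℂ) * (ξ : ℂ)) = ((c : ℂ) * ξ - 1) := by
        have h0 := congrArg (Complex.ofReal) haξ
        push_cast at h0
        exact h0
      have hI : Complex.I * Complex.I = -1 := Complex.I_mul_I
      calc -Complex.I * (ξ : ℂ) * ((a:ℂ) * Complex.I) + Complex.I * (ξ : ℂ) * (v : ℂ) + 1
          = -(Complex.I * Complex.I) * ((a:ℂ) * (ξ:ℂ)) + Complex.I * (ξ : ℂ) * (v : ℂ) + 1 := by ring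
        _ = ((c : ℂ) * ξ - 1) + Complex.I * (ξ : ℂ) * (v : ℂ) + 1 := by rw [hI, this]; ring
        _ = (ξ : ℂ) * ((c : ℂ) + Complex.I * v) := by ring
    rw [hdenr, hf₁, hf₂]
    have hξC : (ξ : ℂ) ≠ 0 := Complex.ofReal_ne_zero.mpr hξ
    have hc2 : ((c : ℝ) ^ 2 + v ^ 2 : ℝ) ≠ 0 := (hden v).ne'
    have hc2C : ((c : ℂ) ^ 2 + (v : ℂ) ^ 2) ≠ 0 := by
      rw [show ((c : ℂ) ^ 2 + (v : ℂ) ^ 2) = (((c^2 + v^2 : ℝ)) : ℂ) by push_cast; ring]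
      exact Complex.ofReal_ne_zero.mpr hc2
    rw [div_eq_iff (mul_ne_zero hξC (hcv v))]
    have e1 : ((f₁ v : ℝ) : ℂ) = (c:ℂ) * v * (phi v) / ((c:ℂ)^2 + (v:ℂ)^2) := by
      simp only [hf₁]; push_cast; ring
    have e2 : ((f₂ v : ℝ) : ℂ) = (v:ℂ)^2 * (phi v) / ((c:ℂ)^2 + (v:ℂ)^2) := by
      simp only [hf₂]; push_cast; ring
    rw [e1, e2]
    field_simp
    linear_combination ((v:ℂ)^3 * (phi v)) * Complex.I_sq
  -- compute the complex integral
  have hci : (∫ v : ℝ, (v : ℂ) * (phi v : ℂ) /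
        (-Complex.I * (ξ : ℂ) * k + Complex.I * (ξ : ℂ) * (v : ℂ) + 1))
      = ((1 : ℂ) / ξ) * (0 - ((1 - c * T : ℝ) : ℂ) * Complex.I) := by
    rw [MeasureTheory.integral_congr_ae (Filter.Eventually.of_forall hptwise),
      MeasureTheory.integral_const_mul]
    have hI1 : Integrable (fun v => ((f₁ v : ℂ))) := hint₁.ofReal
    have hI2 : Integrable (fun v => ((f₂ v : ℂ)) * Complex.I) := by
      exact hint₂.ofReal.mul_const Complex.I
    have hco : ∀ (f : ℝ → ℝ), Integrable f → (∫ x : ℝ, ((f x : ℝ) : ℂ)) = ((∫ x : ℝ, f x : ℝ) : ℂ) := by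
      intro f hf
      simpa using Complex.ofRealCLM.integral_comp_comm hf
    rw [MeasureTheory.integral_sub hI1 hI2, MeasureTheory.integral_mul_const,
      hco f₁ hint₁, hco f₂ hint₂, hodd, hintf₂]
    norm_num
  rw [hci, hk]
  constructor
  · intro h
    have h2 : (a : ℂ) = ((1 : ℂ) / ξ) * (0 - ((1 - c * T : ℝ) : ℂ)) := by
      have := mul_right_cancel₀ Complex.I_ne_zero (by
        rw [h]; ring_nf : (a : ℂ) * Complex.I
          = (((1 : ℂ) / ξ) * (0 - ((1 - c * T : ℝ) : ℂ))) * Complex.I)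
      exact this
    have h3 : a = (1 / ξ) * (0 - (1 - c * T)) := by
      rw [show ((1 : ℂ) / ξ) * (0 - ((1 - c * T : ℝ) : ℂ))
        = (((1 / ξ) * (0 - (1 - c * T)) : ℝ) : ℂ) from by push_cast; ring] at h2
      exact_mod_cast h2
    rw [ha] at h3
    field_simp at h3
    exact mul_left_cancel₀ hc.ne' (by linarith)
  · intro h
    have h4 : a = (1 / ξ) * (0 - (1 - c * T)) := by
      rw [ha, ← h]; field_simp; ring
    rw [h4]; push_cast; ring
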